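/- For ρ ∈ (0,1) with chemical potential φ = log(ρ/(1-ρ)), define S_{ρ,ρ}(E) = -s((-E + log(1+e^φ))/φ) where s(θ)=θ log θ+(1-θ)log(1-θ) (for φ ≠ 0). Then the Legendre-type transform inf over E of {θE - S_{ρ,ρ}(E)} equals P(φ,θ) = θ log(1+e^φ) - log(1+e^{φθ}). -/

import Mathlib

noncomputable def entS (θ : ℝ) : ℝ := θ * Real.log θ + (1 - θ) * Real.log (1 - θ)

noncomputable def Srr (φ E : ℝ) : ℝ := - entS ((-E + Real.log (1 + Real.exp φ)) / φ)

noncomputable def Pfun (φ θ : ℝ) : ℝ :=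
  θ * Real.log (1 + Real.exp φ) - Real.log (1 + Real.exp (φ * θ))

lemma log_sig (a : ℝ) : Real.log (Real.exp a / (1 + Real.exp a)) = a - Real.log (1 + Real.exp a) := by
  rw [Real.log_div (Real.exp_ne_zero a) (by positivity), Real.log_exp]

lemma one_sub_sig (a : ℝ) : 1 - Real.exp a / (1 + Real.exp a) = 1 / (1 + Real.exp a) := by
  have h : (0:ℝ) < 1 + Real.exp a := by positivity
  field_simp; ring

lemma entS_sig (a : ℝ) :
    entS (Real.exp a / (1 + Real.exp a)) =
      a * (Real.exp a / (1 + Real.exp a)) - Real.log (1 + Real.exp a) := by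
  have h : (0:ℝ) < 1 + Real.exp a := by positivity
  unfold entS
  rw [log_sig, one_sub_sig, one_div, Real.log_inv]
  have hp : Real.exp a / (1 + Real.exp a) ≤ 1 := by
    rw [div_le_one h]; linarith [Real.exp_pos a]
  have hq : Real.exp a / (1 + Real.exp a) + 1 / (1 + Real.exp a) = 1 := by field_simp; ring
  linear_combination (- Real.log (1 + Real.exp a)) * hq

lemma key_ineq (a u : ℝ) (hu : u ∈ Set.Ioo (0:ℝ) 1) :
    entS u - a * u ≥ - Real.log (1 + Real.exp a) := by
  obtain ⟨hu0, hu1⟩ := hu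
  set p := Real.exp a / (1 + Real.exp a) with hp_def
  have hden : (0:ℝ) < 1 + Real.exp a := by positivity
  have hp0 : 0 < p := by positivity
  have hp1 : p < 1 := by
    rw [hp_def, div_lt_one hden]; linarith [Real.exp_pos a]
  have hlogp : Real.log p = a - Real.log (1 + Real.exp a) := log_sig a
  have hlog1p : Real.log (1 - p) = - Real.log (1 + Real.exp a) := by
    rw [hp_def, one_sub_sig, one_div, Real.log_inv]
  have h1 : Real.log (p / u) ≤ p / u - 1 := Real.log_le_sub_one_of_pos (by positivity)
  have h2 : Real.log ((1 - p) / (1 - u)) ≤ (1 - p) / (1 - u) - 1 :=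
    Real.log_le_sub_one_of_pos (by apply div_pos <;> linarith)
  have hd1 : Real.log (p / u) = Real.log p - Real.log u :=
    Real.log_div (ne_of_gt hp0) (ne_of_gt hu0)
  have hd2 : Real.log ((1 - p) / (1 - u)) = Real.log (1 - p) - Real.log (1 - u) :=
    Real.log_div (by linarith) (by linarith)
  rw [hd1] at h1
  rw [hd2] at h2
  have e1 : u * (Real.log p - Real.log u) ≤ p - u := by
    have := mul_le_mul_of_nonneg_left h1 (le_of_lt hu0)
    rw [mul_sub] at this
    calc u * (Real.log p - Real.log u) ≤ u * (p / u) - u * 1 := by linarith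
      _ = p - u := by field_simp
  have e2 : (1 - u) * (Real.log (1 - p) - Real.log (1 - u)) ≤ (1 - p) - (1 - u) := by
    have h1u : (0:ℝ) < 1 - u := by linarith
    have := mul_le_mul_of_nonneg_left h2 (le_of_lt h1u)
    rw [mul_sub] at this
    calc (1 - u) * (Real.log (1 - p) - Real.log (1 - u))
        ≤ (1 - u) * ((1 - p) / (1 - u)) - (1 - u) * 1 := by linarith
      _ = (1 - p) - (1 - u) := by field_simp
  have hsum : u * Real.log p + (1 - u) * Real.log (1 - p) = a * u - Real.log (1 + Real.exp a) := by
    rw [hlogp, hlog1p]; ring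
  unfold entS
  nlinarith [e1, e2, hsum]

theorem stmt_4 (ρ : ℝ) (hρ : ρ ∈ Set.Ioo (0:ℝ) 1) (hρ' : ρ ≠ 1/2)
    (φ : ℝ) (hφ : φ = Real.log (ρ / (1 - ρ))) (θ : ℝ) :
    sInf {x : ℝ | ∃ E : ℝ,
        (-E + Real.log (1 + Real.exp φ)) / φ ∈ Set.Ioo (0:ℝ) 1 ∧
        x = θ * E - Srr φ E} = Pfun φ θ := by
  obtain ⟨hρ0, hρ1⟩ := hρ
  have hratio : ρ / (1 - ρ) ≠ 1 := by
    intro h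
    have h1ρ : (0:ℝ) < 1 - ρ := by linarith
    rw [div_eq_one_iff_eq (ne_of_gt h1ρ)] at h
    apply hρ'; linarith
  have hφ0 : φ ≠ 0 := by
    rw [hφ]
    intro h
    rcases (Real.log_eq_zero).1 h with h' | h' | h'
    · exact absurd h' (ne_of_gt (div_pos hρ0 (by linarith)))
    · exact hratio h'
    · have : (0:ℝ) < ρ / (1 - ρ) := div_pos hρ0 (by linarith)
      linarith
  set L := Real.log (1 + Real.exp φ) with hL
  set a := φ * θ with ha
  set p := Real.exp a / (1 + Real.exp a) with hp_def
  have hden : (0:ℝ) < 1 + Real.exp a := by positivity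
  have hp0 : 0 < p := by positivity
  have hp1 : p < 1 := by rw [hp_def, div_lt_one hden]; linarith [Real.exp_pos a]
  -- membership of Pfun
  have hmem : Pfun φ θ ∈ {x : ℝ | ∃ E : ℝ,
      (-E + L) / φ ∈ Set.Ioo (0:ℝ) 1 ∧ x = θ * E - Srr φ E} := by
    refine ⟨L - φ * p, ?_, ?_⟩
    · have harg : (-(L - φ * p) + L) / φ = p := by field_simp; ring
      rw [harg]; exact ⟨hp0, hp1⟩
    · have harg : (-(L - φ * p) + L) / φ = p := by field_simp; ring
      unfold Srr Pfun
      rw [← hL, harg, entS_sig]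
      rw [← hp_def, ← ha]
      ring
  -- lower bound
  have hlb : ∀ x ∈ {x : ℝ | ∃ E : ℝ,
      (-E + L) / φ ∈ Set.Ioo (0:ℝ) 1 ∧ x = θ * E - Srr φ E}, Pfun φ θ ≤ x := by
    rintro x ⟨E, hu, hx⟩
    set u := (-E + L) / φ with hu_def
    have hE : E = L - φ * u := by
      rw [hu_def]; field_simp; ring
    have hkey := key_ineq a u hu
    unfold Srr at hx
    rw [← hL, ← hu_def] at hx
    have : x = θ * L + (entS u - a * u) := by
      rw [hx, hE, ha]; ring
    rw [this]
    unfold Pfun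
    rw [← hL, ← ha]
    linarith
  exact le_antisymm (csInf_le ⟨Pfun φ θ, hlb⟩ hmem) (le_csInf ⟨Pfun φ θ, hmem⟩ hlb)
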